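/- There exists an aperiodic Wang tile set consisting of exactly 13 tiles (Kari–Culik). -/

import Mathlib

/-- A Wang tile: the colours of its (west, south, east, north) edges. -/
abbrev WangTile : Type := ℕ × ℕ × ℕ × ℕ

def WangTile.west (t : WangTile) : ℕ := t.1
def WangTile.south (t : WangTile) : ℕ := t.2.1
def WangTile.east (t : WangTile) : ℕ := t.2.2.1
def WangTile.north (t : WangTile) : ℕ := t.2.2.2

/-- The Wang matching conditions for a configuration of tiles on `ℤ × ℤ`. -/
def WangMatch (f : ℤ × ℤ → WangTile) : Prop :=
  ∀ x y : ℤ,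
    (f (x, y)).east = (f (x + 1, y)).west ∧ (f (x, y)).north = (f (x, y + 1)).south

/-- A tiling of the plane by the Wang tile set `S`. -/
def IsWangTiling (S : Finset WangTile) (f : ℤ × ℤ → WangTile) : Prop :=
  (∀ p, f p ∈ S) ∧ WangMatch f

/-- A configuration is periodic if it is invariant under some nonzero translation. -/
def WangPeriodic (f : ℤ × ℤ → WangTile) : Prop :=
  ∃ v : ℤ × ℤ, v ≠ 0 ∧ ∀ p, f (p + v) = f p

/-- A Wang tile set is aperiodic if it admits a tiling of the plane and every tiling
of the plane by it is nonperiodic. -/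
def WangAperiodic (S : Finset WangTile) : Prop :=
  (∃ f, IsWangTiling S f) ∧ ∀ f, IsWangTiling S f → ¬ WangPeriodic f

namespace KC

noncomputable def L : ℝ := Real.logb 2 6
noncomputable def kk (y : ℤ) : ℤ := ⌈((y : ℝ) - 1) / L⌉
noncomputable def xx (y : ℤ) : ℝ := (2:ℝ) ^ (y - kk y) * (3:ℝ) ^ (-kk y)

lemma L_pos : 0 < L := Real.logb_pos (by norm_num) (by norm_num)

lemma one_le_L : 1 ≤ L := by
  have : Real.logb 2 2 ≤ Real.logb 2 6 := by
    apply Real.logb_le_logb_of_le (by norm_num : (1:ℝ) < 2) (by norm_num) (by norm_num)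
  simpa [L, Real.logb_self_eq_one] using this

lemma two_rpow_L : (2:ℝ) ^ L = 6 := Real.rpow_logb (by norm_num) (by norm_num) (by norm_num)

lemma xx_rpow (y : ℤ) : xx y = (2:ℝ) ^ ((y:ℝ) - L * (kk y : ℝ)) := by
  have h2 : (0:ℝ) < 2 := by norm_num
  have h6 : xx y = (2:ℝ) ^ (y:ℤ) * ((6:ℝ) ^ (-kk y : ℤ)) := by
    unfold xx
    rw [zpow_sub₀ (by norm_num : (2:ℝ) ≠ 0)]
    have : ((6:ℝ) ^ (-kk y : ℤ)) = (2:ℝ) ^ (-kk y : ℤ) * (3:ℝ) ^ (-kk y : ℤ) := by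
      rw [← mul_zpow]; norm_num
    rw [this]
    simp only [zpow_neg]
    ring
  rw [h6]
  have e2 : (2:ℝ) ^ (y:ℤ) = (2:ℝ) ^ ((y:ℤ):ℝ) := (Real.rpow_intCast 2 y).symm
  have e6 : ((6:ℝ) ^ (-kk y : ℤ)) = (2:ℝ) ^ (L * (-(kk y):ℝ)) := by
    rw [Real.rpow_mul (le_of_lt h2), two_rpow_L]
    rw [← Real.rpow_intCast 6 (-kk y)]
    push_cast
    ring_nf
  rw [e2, e6, ← Real.rpow_add h2]
  push_cast
  ring_nf

lemma xx_le_two (y : ℤ) : xx y ≤ 2 := by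
  rw [xx_rpow]
  have h : ((y:ℝ) - 1) / L ≤ (kk y : ℝ) := Int.le_ceil _
  have h2 : (y:ℝ) - L * kk y ≤ 1 := by
    rw [div_le_iff₀ L_pos] at h
    nlinarith
  calc (2:ℝ) ^ ((y:ℝ) - L * kk y) ≤ (2:ℝ) ^ (1:ℝ) := by
        apply Real.rpow_le_rpow_of_exponent_le (by norm_num) h2
    _ = 2 := by norm_num

lemma third_lt_xx (y : ℤ) : 1/3 < xx y := by
  rw [xx_rpow]
  have h : (kk y : ℝ) < ((y:ℝ) - 1) / L + 1 := Int.ceil_lt_add_one _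
  have h2 : 1 - L < (y:ℝ) - L * kk y := by
    have := L_pos
    rw [show (kk y:ℝ) < ((y:ℝ) - 1)/L + 1 ↔ (kk y:ℝ) - 1 < ((y:ℝ)-1)/L by constructor <;> intro <;> linarith] at h
    rw [lt_div_iff₀ L_pos] at h
    nlinarith
  have : (2:ℝ) ^ ((1:ℝ) - L) < (2:ℝ) ^ ((y:ℝ) - L * kk y) :=
    Real.rpow_lt_rpow_of_exponent_lt (by norm_num) h2
  have e : (2:ℝ) ^ ((1:ℝ) - L) = 1/3 := by
    rw [Real.rpow_sub (by norm_num), two_rpow_L]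
    norm_num
  linarith [e ▸ this]

lemma xx_pos (y : ℤ) : 0 < xx y := lt_trans (by norm_num) (third_lt_xx y)

lemma kk_step (y : ℤ) : kk (y+1) = kk y ∨ kk (y+1) = kk y + 1 := by
  have hlow : kk y ≤ kk (y+1) := by
    unfold kk
    apply Int.ceil_le_ceil
    have : ((y:ℝ) - 1) ≤ ((y+1:ℤ):ℝ) - 1 := by push_cast; linarith
    exact div_le_div_of_nonneg_right this (le_of_lt L_pos)
  have hhigh : kk (y+1) ≤ kk y + 1 := by
    have h1 : ((y+1:ℤ):ℝ) - 1 = ((y:ℝ) - 1) + 1 := by push_cast; ring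
    unfold kk
    rw [h1]
    have : (((y:ℝ) - 1) + 1) / L ≤ ((y:ℝ) - 1)/L + 1 := by
      rw [add_div]
      have : 1/L ≤ 1 := by
        rw [div_le_one L_pos]; exact one_le_L
      linarith
    calc ⌈(((y:ℝ) - 1) + 1) / L⌉ ≤ ⌈((y:ℝ) - 1)/L + 1⌉ := Int.ceil_le_ceil this
      _ = ⌈((y:ℝ) - 1)/L⌉ + 1 := by
          rw [show ((y:ℝ) - 1)/L + 1 = ((y:ℝ) - 1)/L + (1:ℤ) by push_cast; ring, Int.ceil_add_intCast]
  omega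

lemma xx_step (y : ℤ) : xx (y+1) = if xx y ≤ 1 then 2 * xx y else xx y / 3 := by
  have h2 : (2:ℝ) ≠ 0 := by norm_num
  have h3 : (3:ℝ) ≠ 0 := by norm_num
  rcases kk_step y with h | h
  · have e : xx (y+1) = 2 * xx y := by
      unfold xx
      rw [h, show y + 1 - kk y = (y - kk y) + 1 by ring, zpow_add₀ h2]
      ring
    have hle : xx y ≤ 1 := by
      have := xx_le_two (y+1)
      rw [e] at this; linarith
    rw [if_pos hle, e]
  · have e : xx (y+1) = xx y / 3 := by
      unfold xx
      rw [h, show y + 1 - (kk y + 1) = y - kk y by ring, neg_add, zpow_add₀ h3]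
      field_simp
    have hgt : ¬ xx y ≤ 1 := by
      intro hc
      have := third_lt_xx (y+1)
      rw [e] at this; linarith
    rw [if_neg hgt, e]

/-! digits and carries -/

noncomputable def fl (y i : ℤ) : ℤ := ⌊(i:ℝ) * xx y⌋
noncomputable def DD (y i : ℤ) : ℤ := fl y (i+1) - fl y i

lemma fl_le (y i : ℤ) : (fl y i : ℝ) ≤ (i:ℝ) * xx y := Int.floor_le _
lemma lt_fl (y i : ℤ) : (i:ℝ) * xx y < fl y i + 1 := Int.lt_floor_add_one _

lemma DD_nonneg (y i : ℤ) : 0 ≤ DD y i := by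
  unfold DD fl
  have : (i:ℝ) * xx y ≤ ((i+1 : ℤ):ℝ) * xx y := by
    have := xx_pos y
    push_cast
    nlinarith
  have := Int.floor_mono this
  omega

lemma DD_le (y i : ℤ) (m : ℤ) (hm : 0 ≤ m) (hx : xx y ≤ m) : DD y i ≤ m := by
  unfold DD fl
  have h1 : ((i+1:ℤ):ℝ) * xx y < (⌊(i:ℝ) * xx y⌋ : ℝ) + 1 + m := by
    have h2 := lt_fl y i
    unfold fl at h2
    push_cast
    push_cast at h2
    nlinarith [xx_pos y]
  have : ⌊((i+1:ℤ):ℝ) * xx y⌋ < ⌊(i:ℝ) * xx y⌋ + 1 + m := by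
    rw [Int.floor_lt]
    push_cast
    push_cast at h1
    linarith
  omega

lemma DD_pos (y i : ℤ) (hx : 1 ≤ xx y) : 1 ≤ DD y i := by
  unfold DD fl
  have h1 : (⌊(i:ℝ) * xx y⌋ : ℝ) + 1 ≤ ((i+1:ℤ):ℝ) * xx y := by
    have h2 := fl_le y i
    unfold fl at h2
    push_cast
    push_cast at h2
    nlinarith
  have : ⌊(i:ℝ) * xx y⌋ + 1 ≤ ⌊((i+1:ℤ):ℝ) * xx y⌋ := by
    rw [Int.le_floor]
    push_cast
    push_cast at h1
    linarith
  omega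

/-- vertical colour: the digit, with 0 recoloured to 3 when the row value exceeds 2/3. -/
noncomputable def sc (y i : ℤ) : ℕ :=
  if DD y i = 0 ∧ 2/3 < xx y then 3 else (DD y i).toNat

/-- horizontal colour: carry of the ×2 machine (colours 0,1) or ×(1/3) machine (colours 2,3,4). -/
noncomputable def wc (y i : ℤ) : ℕ :=
  if xx y ≤ 1 then (2 * fl y i - fl (y+1) i + 1).toNat else (fl y i - 3 * fl (y+1) i + 2).toNat

noncomputable def F : ℤ × ℤ → WangTile :=
  fun p => (wc p.2 p.1, sc p.2 p.1, wc p.2 (p.1+1), sc (p.2+1) p.1)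

lemma carry2_bounds (y i : ℤ) (h : xx y ≤ 1) :
    2 * fl y i - fl (y+1) i = 0 ∨ 2 * fl y i - fl (y+1) i = -1 := by
  have hx : xx (y+1) = 2 * xx y := by rw [xx_step y, if_pos h]
  have e : fl (y+1) i = ⌊2 * ((i:ℝ) * xx y)⌋ := by
    unfold fl
    rw [hx]; ring_nf
  have h1 : 2 * fl y i ≤ ⌊2 * ((i:ℝ) * xx y)⌋ := by
    rw [Int.le_floor]
    push_cast
    nlinarith [fl_le y i]
  have h2 : ⌊2 * ((i:ℝ) * xx y)⌋ ≤ 2 * fl y i + 1 := by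
    have : ⌊2 * ((i:ℝ) * xx y)⌋ < 2 * fl y i + 2 := by
      rw [Int.floor_lt]
      push_cast
      nlinarith [lt_fl y i]
    omega
  omega

lemma carry3_bounds (y i : ℤ) (h : ¬ xx y ≤ 1) :
    0 ≤ fl y i - 3 * fl (y+1) i ∧ fl y i - 3 * fl (y+1) i ≤ 2 := by
  have hx : xx (y+1) = xx y / 3 := by rw [xx_step y, if_neg h]
  have e : (i:ℝ) * xx (y+1) = ((i:ℝ) * xx y) / 3 := by rw [hx]; ring
  set z : ℝ := (i:ℝ) * xx y with hz
  have e2 : fl (y+1) i = ⌊z / 3⌋ := by unfold fl; rw [e]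
  have hfz : fl y i = ⌊z⌋ := rfl
  have h1 : 3 * ⌊z/3⌋ ≤ fl y i := by
    rw [hfz, Int.le_floor]
    push_cast
    nlinarith [Int.floor_le (z/3)]
  have h2 : fl y i ≤ 3 * ⌊z/3⌋ + 2 := by
    have : fl y i < 3 * ⌊z/3⌋ + 3 := by
      rw [hfz, Int.floor_lt]
      push_cast
      nlinarith [Int.lt_floor_add_one (z/3)]
    omega
  omega

lemma rel2 (y i : ℤ) :
    DD (y+1) i = 2 * DD y i + (2 * fl y i - fl (y+1) i) - (2 * fl y (i+1) - fl (y+1) (i+1)) := by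
  unfold DD; ring

lemma rel3 (y i : ℤ) :
    3 * DD (y+1) i = DD y i + (fl y i - 3 * fl (y+1) i) - (fl y (i+1) - 3 * fl (y+1) (i+1)) := by
  unfold DD; ring

lemma forcing (y i : ℤ) (h : xx y ≤ 1) (h23 : 2/3 < xx y) (hD : DD y i = 0) :
    2 * fl y i - fl (y+1) i = 0 ∧ 2 * fl y (i+1) - fl (y+1) (i+1) = -1 := by
  have hx : xx (y+1) = 2 * xx y := by rw [xx_step y, if_pos h]
  have efl : ∀ j : ℤ, fl (y+1) j = ⌊2 * ((j:ℝ) * xx y)⌋ := by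
    intro j; unfold fl; rw [hx]; ring_nf
  set z : ℝ := (i:ℝ) * xx y with hz
  have hzx : ((i+1:ℤ):ℝ) * xx y = z + xx y := by push_cast; ring
  have hD' : fl y (i+1) = fl y i := by unfold DD at hD; omega
  have hub : z + xx y < (fl y i : ℝ) + 1 := by
    have h3 := lt_fl y (i+1)
    rw [hzx, hD'] at h3
    exact h3
  have hlb : (fl y i : ℝ) ≤ z := fl_le y i
  constructor
  · rw [efl i, ← hz]
    have h1 : 2 * fl y i ≤ ⌊2 * z⌋ := by
      rw [Int.le_floor]; push_cast; nlinarith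
    have h2 : ⌊2 * z⌋ < 2 * fl y i + 1 := by
      rw [Int.floor_lt]; push_cast; nlinarith
    omega
  · rw [efl (i+1), hD', hzx]
    have h1 : 2 * fl y i + 1 ≤ ⌊2 * (z + xx y)⌋ := by
      rw [Int.le_floor]; push_cast; nlinarith
    have h2 : ⌊2 * (z + xx y)⌋ < 2 * fl y i + 2 := by
      rw [Int.floor_lt]; push_cast; nlinarith
    omega

def culikSet : Finset WangTile :=
  {(1,0,1,3),(1,0,0,1),(0,0,0,3),(1,3,0,1),(0,1,1,1),(1,1,1,2),(0,1,0,2),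
   (2,1,3,0),(3,1,4,0),(4,1,2,1),(2,2,4,0),(3,2,2,1),(4,2,3,1)}

lemma F_mem (p : ℤ × ℤ) : F p ∈ culikSet := by
  obtain ⟨i, y⟩ := p
  show (wc y i, sc y i, wc y (i+1), sc (y+1) i) ∈ culikSet
  have hb := third_lt_xx y
  have hb2 := xx_le_two y
  have hD0 := DD_nonneg y i
  have hN0 := DD_nonneg (y+1) i
  by_cases h : xx y ≤ 1
  · -- ×2 rows
    have hx' : xx (y+1) = 2 * xx y := by rw [xx_step y, if_pos h]
    have hx23 : 2/3 < xx (y+1) := by rw [hx']; linarith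
    have hD1 : DD y i ≤ 1 := DD_le y i 1 (by norm_num) (by exact_mod_cast h)
    have hN2 : DD (y+1) i ≤ 2 := DD_le (y+1) i 2 (by norm_num)
      (by rw [hx']; push_cast; linarith)
    have hc := carry2_bounds y i h
    have hc' := carry2_bounds y (i+1) h
    have hrel := rel2 y i
    have hwc : wc y i = (2 * fl y i - fl (y+1) i + 1).toNat := by unfold wc; rw [if_pos h]
    have hwc' : wc y (i+1) = (2 * fl y (i+1) - fl (y+1) (i+1) + 1).toNat := by
      unfold wc; rw [if_pos h]
    have hDcase : DD y i = 0 ∨ DD y i = 1 := by omega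
    rcases hDcase with hD | hD
    · by_cases h23 : 2/3 < xx y
      · obtain ⟨e1, e2⟩ := forcing y i h h23 hD
        have hn : DD (y+1) i = 1 := by omega
        have hsc : sc y i = 3 := by unfold sc; rw [if_pos ⟨hD, h23⟩]
        have hsc' : sc (y+1) i = 1 := by
          unfold sc; rw [if_neg (by simp [hn])]; rw [hn]; rfl
        rw [hsc, hsc', hwc, hwc', e1, e2]
        decide
      · have hsc : sc y i = 0 := by
          unfold sc; rw [if_neg (by tauto), hD]; rfl
        rcases hc with e1 | e1 <;> rcases hc' with e2 | e2
        · have hn : DD (y+1) i = 0 := by omega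
          have hsc' : sc (y+1) i = 3 := by unfold sc; rw [if_pos ⟨hn, hx23⟩]
          rw [hsc, hsc', hwc, hwc', e1, e2]; decide
        · have hn : DD (y+1) i = 1 := by omega
          have hsc' : sc (y+1) i = 1 := by
            unfold sc; rw [if_neg (by simp [hn]), hn]; rfl
          rw [hsc, hsc', hwc, hwc', e1, e2]; decide
        · omega
        · have hn : DD (y+1) i = 0 := by omega
          have hsc' : sc (y+1) i = 3 := by unfold sc; rw [if_pos ⟨hn, hx23⟩]
          rw [hsc, hsc', hwc, hwc', e1, e2]; decide
    · have hsc : sc y i = 1 := by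
        unfold sc; rw [if_neg (by simp [hD]), hD]; rfl
      rcases hc with e1 | e1 <;> rcases hc' with e2 | e2
      · have hn : DD (y+1) i = 2 := by omega
        have hsc' : sc (y+1) i = 2 := by
          unfold sc; rw [if_neg (by simp [hn]), hn]; rfl
        rw [hsc, hsc', hwc, hwc', e1, e2]; decide
      · omega
      · have hn : DD (y+1) i = 1 := by omega
        have hsc' : sc (y+1) i = 1 := by
          unfold sc; rw [if_neg (by simp [hn]), hn]; rfl
        rw [hsc, hsc', hwc, hwc', e1, e2]; decide
      · have hn : DD (y+1) i = 2 := by omega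
        have hsc' : sc (y+1) i = 2 := by
          unfold sc; rw [if_neg (by simp [hn]), hn]; rfl
        rw [hsc, hsc', hwc, hwc', e1, e2]; decide
  · -- ×(1/3) rows
    have hgt : 1 < xx y := not_le.mp h
    have hx' : xx (y+1) = xx y / 3 := by rw [xx_step y, if_neg h]
    have hx23 : ¬ 2/3 < xx (y+1) := by rw [hx']; push_cast; linarith
    have hD1 : 1 ≤ DD y i := DD_pos y i (le_of_lt hgt)
    have hD2 : DD y i ≤ 2 := DD_le y i 2 (by norm_num) (by push_cast; linarith)
    have hN1 : DD (y+1) i ≤ 1 := DD_le (y+1) i 1 (by norm_num)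
      (by rw [hx']; push_cast; linarith)
    obtain ⟨hk0, hk2⟩ := carry3_bounds y i h
    obtain ⟨hk0', hk2'⟩ := carry3_bounds y (i+1) h
    have hrel := rel3 y i
    have hwc : wc y i = (fl y i - 3 * fl (y+1) i + 2).toNat := by unfold wc; rw [if_neg h]
    have hwc' : wc y (i+1) = (fl y (i+1) - 3 * fl (y+1) (i+1) + 2).toNat := by
      unfold wc; rw [if_neg h]
    have hsc : sc y i = (DD y i).toNat := by
      unfold sc; rw [if_neg (by intro hcon; omega)]
    have hsc' : sc (y+1) i = (DD (y+1) i).toNat := by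
      unfold sc; rw [if_neg (by tauto)]
    rw [hsc, hsc', hwc, hwc']
    set a := DD y i with ha
    set n := DD (y+1) i with hn
    set u := fl y i - 3 * fl (y+1) i with hu
    set v := fl y (i+1) - 3 * fl (y+1) (i+1) with hv
    have hrel' : 3 * n = a + u - v := by omega
    -- finite enumeration
    interval_cases u <;> interval_cases v <;> interval_cases a <;>
      (first
        | omega
        | (have hnv : n = 0 := by omega
           rw [hnv]; simp only [Int.toNat_zero, Int.toNat_one, Int.toNat_natCast]; decide)
        | (have hnv : n = 1 := by omega
           rw [hnv]; simp only [Int.toNat_zero, Int.toNat_one, Int.toNat_natCast]; decide))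

lemma F_tiling : IsWangTiling culikSet F := by
  refine ⟨F_mem, fun x y => ⟨rfl, rfl⟩⟩


/-- value of a vertical colour (the recoloured `3` has value 0). -/
def vmap (c : ℕ) : ℤ := if c = 3 then 0 else (c : ℤ)

lemma vmap_nonneg (c : ℕ) : 0 ≤ vmap c := by unfold vmap; split <;> omega

lemma L_ew : ∀ t ∈ culikSet, ((t.west < 2) ↔ (t.east < 2)) := by decide
lemma L_sle : ∀ t ∈ culikSet, vmap t.south ≤ 2 := by decide
lemma L_wlt : ∀ t ∈ culikSet, t.west < 5 ∧ t.east < 5 := by decide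
lemma L_rel2 : ∀ t ∈ culikSet, t.west < 2 →
    vmap t.north + (t.east : ℤ) = 2 * vmap t.south + (t.west : ℤ) := by decide
lemma L_rel3 : ∀ t ∈ culikSet, ¬ t.west < 2 →
    3 * vmap t.north + (t.east : ℤ) = vmap t.south + (t.west : ℤ) := by decide
lemma L_zero : ∀ t ∈ culikSet, vmap t.south = 0 → vmap t.north = 0 → t.north = 3 := by decide
lemma L_T4 : ∀ t ∈ culikSet, t.south = 3 → t.west = 1 ∧ t.east = 0 := by decide

section Tiling

variable {f : ℤ × ℤ → WangTile} (hf : IsWangTiling culikSet f)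

include hf

lemma purity (k : ℤ) : ∀ i : ℤ, ((f (i,k)).west < 2 ↔ (f (0,k)).west < 2) := by
  have step : ∀ i : ℤ, ((f (i+1,k)).west < 2 ↔ (f (i,k)).west < 2) := by
    intro i
    have hm := (hf.2 i k).1
    have := L_ew _ (hf.1 (i,k))
    rw [← hm]
    tauto
  intro i
  induction i using Int.induction_on with
  | zero => rfl
  | succ j ih => rw [step j]; exact ih
  | pred j ih =>
      rw [← ih]
      have := (step (-j-1)).symm
      rw [show (-(j:ℤ)-1+1) = -(j:ℤ) by ring] at this
      exact this

/-- sum of the values of the south edges of `L` consecutive tiles in row `k` starting at `s`. -/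
def Rsum (k s : ℤ) (L : ℕ) : ℤ := ∑ j ∈ Finset.range L, vmap (f (s + j, k)).south

omit hf in
lemma Rsum_nonneg (k s : ℤ) (L : ℕ) : 0 ≤ Rsum (f := f) k s L :=
  Finset.sum_nonneg fun j _ => vmap_nonneg _

lemma Rsum_le (k s : ℤ) (L : ℕ) : Rsum (f := f) k s L ≤ 2 * L := by
  calc Rsum (f := f) k s L ≤ ∑ _j ∈ Finset.range L, (2:ℤ) :=
        Finset.sum_le_sum fun j _ => L_sle _ (hf.1 _)
    _ = 2 * L := by simp [mul_comm]

lemma Rsum_succ_row (k s : ℤ) (L : ℕ) :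
    Rsum (f := f) (k+1) s L = ∑ j ∈ Finset.range L, vmap (f (s + j, k)).north := by
  unfold Rsum
  refine Finset.sum_congr rfl fun j _ => ?_
  rw [(hf.2 (s+j) k).2]

lemma rowrel2 (k s : ℤ) (L : ℕ) (hrow : (f (0,k)).west < 2) :
    Rsum (f := f) (k+1) s L
      = 2 * Rsum (f := f) k s L + (((f (s,k)).west : ℤ) - ((f (s + L, k)).west : ℤ)) := by
  rw [Rsum_succ_row hf]
  have hper : ∀ j : ℕ, vmap (f (s + j, k)).north
      = 2 * vmap (f (s + j, k)).south
        + (((f (s + j, k)).west : ℤ) - ((f (s + (j+1), k)).west : ℤ)) := by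
    intro j
    have hM : (f (s + j, k)).west < 2 := (purity hf k _).mpr hrow
    have hrel := L_rel2 _ (hf.1 (s + j, k)) hM
    have hmatch := (hf.2 (s + j) k).1
    have : ((f (s + j, k)).east : ℤ) = ((f (s + (j+1), k)).west : ℤ) := by
      rw [hmatch]; norm_num; ring_nf
    omega
  calc (∑ j ∈ Finset.range L, vmap (f (s + j, k)).north)
      = ∑ j ∈ Finset.range L, (2 * vmap (f (s + j, k)).south
          + (((f (s + j, k)).west : ℤ) - ((f (s + (j+1), k)).west : ℤ))) :=
        Finset.sum_congr rfl fun j _ => hper j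
    _ = 2 * Rsum (f := f) k s L
        + ∑ j ∈ Finset.range L, ((fun m : ℕ => ((f (s + m, k)).west : ℤ)) j
            - (fun m : ℕ => ((f (s + m, k)).west : ℤ)) (j+1)) := by
        rw [Finset.sum_add_distrib, ← Finset.mul_sum]; rfl
    _ = _ := by
        rw [Finset.sum_range_sub' (fun m : ℕ => ((f (s + m, k)).west : ℤ)) L]
        norm_num

lemma rowrel3 (k s : ℤ) (L : ℕ) (hrow : ¬ (f (0,k)).west < 2) :
    3 * Rsum (f := f) (k+1) s L
      = Rsum (f := f) k s L + (((f (s,k)).west : ℤ) - ((f (s + L, k)).west : ℤ)) := by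
  rw [Rsum_succ_row hf]
  have hper : ∀ j : ℕ, 3 * vmap (f (s + j, k)).north
      = vmap (f (s + j, k)).south
        + (((f (s + j, k)).west : ℤ) - ((f (s + (j+1), k)).west : ℤ)) := by
    intro j
    have hM : ¬ (f (s + j, k)).west < 2 := fun hc => hrow ((purity hf k _).mp hc)
    have hrel := L_rel3 _ (hf.1 (s + j, k)) hM
    have hmatch := (hf.2 (s + j) k).1
    have : ((f (s + j, k)).east : ℤ) = ((f (s + (j+1), k)).west : ℤ) := by
      rw [hmatch]; norm_num; ring_nf
    omega
  calc 3 * (∑ j ∈ Finset.range L, vmap (f (s + j, k)).north)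
      = ∑ j ∈ Finset.range L, (3 * vmap (f (s + j, k)).north) := by rw [Finset.mul_sum]
    _ = ∑ j ∈ Finset.range L, (vmap (f (s + j, k)).south
          + (((f (s + j, k)).west : ℤ) - ((f (s + (j+1), k)).west : ℤ))) :=
        Finset.sum_congr rfl fun j _ => hper j
    _ = Rsum (f := f) k s L
        + ∑ j ∈ Finset.range L, ((fun m : ℕ => ((f (s + m, k)).west : ℤ)) j
            - (fun m : ℕ => ((f (s + m, k)).west : ℤ)) (j+1)) := by
        rw [Finset.sum_add_distrib]; rfl
    _ = _ := by
        rw [Finset.sum_range_sub' (fun m : ℕ => ((f (s + m, k)).west : ℤ)) L]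
        norm_num

omit hf in
lemma Rsum_shift_one (k s : ℤ) (L : ℕ) :
    Rsum (f := f) k (s-1) L
      = Rsum (f := f) k s L + vmap (f (s-1,k)).south - vmap (f (s-1+L,k)).south := by
  have key : ∑ j ∈ Finset.range (L+1), vmap (f (s - 1 + (j:ℤ), k)).south
      = Rsum (f := f) k s L + vmap (f (s-1,k)).south := by
    rw [Finset.sum_range_succ']
    congr 1
    · apply Finset.sum_congr rfl
      intro j _
      congr 2
      push_cast
      ring
    · norm_num
  have key2 : ∑ j ∈ Finset.range (L+1), vmap (f (s - 1 + (j:ℤ), k)).south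
      = Rsum (f := f) k (s-1) L + vmap (f (s-1+L,k)).south := by
    rw [Finset.sum_range_succ]
    rfl
  omega

lemma vmap_le_two (p : ℤ × ℤ) : vmap (f p).south ≤ 2 := L_sle _ (hf.1 p)

lemma Rsum_shift_bound (k s : ℤ) (L : ℕ) :
    ∀ m : ℕ, Rsum (f := f) k (s - m) L ≤ Rsum (f := f) k s L + 2 * m
      ∧ Rsum (f := f) k s L ≤ Rsum (f := f) k (s - m) L + 2 * m := by
  intro m
  induction m with
  | zero => simp
  | succ m ih =>
    have e : s - (m+1 : ℕ) = (s - m) - 1 := by push_cast; ring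
    have h1 := Rsum_shift_one (f := f) k (s - m) L
    have b1 := vmap_nonneg (f (s - m - 1, k)).south
    have b2 := vmap_nonneg (f (s - m - 1 + L, k)).south
    have b3 := vmap_le_two hf (s - m - 1, k)
    have b4 := vmap_le_two hf (s - m - 1 + L, k)
    constructor
    · rw [e, h1]; push_cast; omega
    · rw [e, h1]; push_cast; omega

omit hf in
lemma pow3_le_pow6 (β j : ℕ) (h : β ≤ j) : (3:ℤ)^β ≤ 6^j := by
  calc (3:ℤ)^β ≤ 3^j := pow_le_pow_right₀ (by norm_num) h
    _ ≤ 6^j := pow_le_pow_left₀ (by norm_num) (by norm_num) j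

omit hf in
lemma pow_ne (α β : ℕ) (h : 1 ≤ α + β) : (3:ℤ)^β ≠ 2^α := by
  intro he
  rcases Nat.eq_zero_or_pos α with h0 | hpos
  · subst h0
    simp only [pow_zero] at he
    have hβ : 1 ≤ β := by omega
    have : (3:ℤ)^1 ≤ 3^β := pow_le_pow_right₀ (by norm_num) hβ
    simp at this
    omega
  · have heven : Even ((2:ℤ)^α) := by
      rcases Nat.exists_eq_succ_of_ne_zero (by omega : α ≠ 0) with ⟨m, rfl⟩
      exact ⟨2^m, by rw [pow_succ]; ring⟩
    have hodd : Odd ((3:ℤ)^β) := Odd.pow ⟨1, by ring⟩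
    rw [he] at hodd
    exact (Int.not_odd_iff_even.mpr heven) hodd

lemma west_bound (p : ℤ × ℤ) : ((f p).west : ℤ) ≤ 4 ∧ (0:ℤ) ≤ ((f p).west : ℤ) := by
  have := L_wlt _ (hf.1 p)
  constructor
  · exact_mod_cast Nat.lt_succ_iff.mp (this.1)
  · positivity

lemma iterate_rows (k s : ℤ) (L : ℕ) :
    ∀ j : ℕ, ∃ α β : ℕ, α + β = j ∧
      ∃ E : ℤ, -(4 * 6^j) ≤ E ∧ E ≤ 4 * 6^j ∧
        (3:ℤ)^β * Rsum (f := f) (k + j) s L = 2^α * Rsum (f := f) k s L + E := by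
  intro j
  induction j with
  | zero => exact ⟨0, 0, rfl, 0, by norm_num, by norm_num, by norm_num⟩
  | succ j ih =>
    obtain ⟨α, β, hαβ, E, hE1, hE2, hE⟩ := ih
    have h6 : (0:ℤ) < 6^j := by positivity
    have h36 : (3:ℤ)^β ≤ 6^j := pow3_le_pow6 β j (by omega)
    have h3p : (0:ℤ) < 3^β := by positivity
    have hk1 : (k + (j+1 : ℕ) : ℤ) = (k + j) + 1 := by push_cast; ring
    by_cases hrow : (f (0, k + j)).west < 2
    · have hr := rowrel2 hf (k+j) s L hrow
      obtain ⟨hw1, hw1'⟩ := west_bound hf (s, k+j)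
      obtain ⟨hw2, hw2'⟩ := west_bound hf (s + L, k+j)
      have hwlt1 : ((f (s, k+j)).west : ℤ) ≤ 1 := by
        have : (f (s, k+j)).west < 2 := (purity hf (k+j) s).mpr hrow
        exact_mod_cast Nat.lt_succ_iff.mp this
      have hwlt2 : ((f (s + L, k+j)).west : ℤ) ≤ 1 := by
        have : (f (s + L, k+j)).west < 2 := (purity hf (k+j) (s+L)).mpr hrow
        exact_mod_cast Nat.lt_succ_iff.mp this
      refine ⟨α + 1, β, by omega,
        2 * E + 3^β * (((f (s,k+j)).west : ℤ) - ((f (s + L, k+j)).west : ℤ)), ?_, ?_, ?_⟩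
      · have : -(4 * 6^(j+1)) = -(24 * 6^j) := by ring
        rw [this]
        nlinarith
      · have : (4 : ℤ) * 6^(j+1) = 24 * 6^j := by ring
        rw [this]
        nlinarith
      · rw [hk1]
        linear_combination (2:ℤ) * hE + (3:ℤ)^β * hr
    · have hr := rowrel3 hf (k+j) s L hrow
      obtain ⟨hw1, hw1'⟩ := west_bound hf (s, k+j)
      obtain ⟨hw2, hw2'⟩ := west_bound hf (s + L, k+j)
      refine ⟨α, β + 1, by omega,
        E + 3^β * (((f (s,k+j)).west : ℤ) - ((f (s + L, k+j)).west : ℤ)), ?_, ?_, ?_⟩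
      · have : -(4 * 6^(j+1)) = -(24 * 6^j) := by ring
        rw [this]
        nlinarith
      · have : (4 : ℤ) * 6^(j+1) = 24 * 6^j := by ring
        rw [this]
        nlinarith
      · rw [hk1]
        linear_combination hE + (3:ℤ)^β * hr

lemma no_period_vert (a b : ℤ) (hb : 0 < b) (hper : ∀ p : ℤ × ℤ, f (p + (a,b)) = f p) :
    False := by
  set B : ℕ := b.toNat with hB
  have hBb : (B:ℤ) = b := Int.toNat_of_nonneg (le_of_lt hb)
  have hB1 : 1 ≤ B := by omega
  have hshiftR : ∀ (k s : ℤ) (L : ℕ),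
      Rsum (f := f) (k + b) s L = Rsum (f := f) k (s - a) L := by
    intro k s L
    unfold Rsum
    apply Finset.sum_congr rfl
    intro j _
    have h := hper (s - a + j, k)
    have e : ((s - a + (j:ℤ), k) + (a, b)) = ((s + (j:ℤ), k + b) : ℤ × ℤ) := by
      simp [Prod.ext_iff]
      ring
    rw [e] at h
    rw [h]
  set m : ℕ := a.natAbs with hm
  set C1 : ℤ := 3^B * (2*m) + 4*6^B with hC1
  have hC1pos : 0 < C1 := by positivity
  have hbound : ∀ (k s : ℤ) (L : ℕ), Rsum (f := f) k s L ≤ C1 := by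
    intro k s L
    obtain ⟨α, β, hαβ, E, hE1, hE2, hE⟩ := iterate_rows hf k s L B
    have hkb : (k + (B:ℕ) : ℤ) = k + b := by rw [hBb]
    rw [hkb, hshiftR k s L] at hE
    have hsh : Rsum (f := f) k (s-a) L ≤ Rsum (f := f) k s L + 2*m
        ∧ Rsum (f := f) k s L ≤ Rsum (f := f) k (s-a) L + 2*m := by
      rcases Int.natAbs_eq a with hA | hA
      · have e : s - a = s - (m:ℤ) := by rw [← hA]
        rw [e]
        exact Rsum_shift_bound hf k s L m
      · have e : s - a = s + (m:ℤ) := by rw [hA]; ring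
        have h2 := Rsum_shift_bound hf k (s + (m:ℤ)) L m
        rw [show (s + (m:ℤ)) - (m:ℤ) = s by ring] at h2
        rw [e]
        exact ⟨h2.2, h2.1⟩
    have h3B : (3:ℤ)^β ≤ 3^B := pow_le_pow_right₀ (by norm_num) (by omega)
    have h3pos : (0:ℤ) < 3^β := by positivity
    have hR0 : 0 ≤ Rsum (f := f) k s L := Rsum_nonneg k s L
    have hR0' : 0 ≤ Rsum (f := f) k (s-a) L := Rsum_nonneg k (s-a) L
    have hm0 : (0:ℤ) ≤ 2*m := by positivity
    have key1 : (3:ℤ)^β * (Rsum (f := f) k (s-a) L - Rsum (f := f) k s L) ≤ 3^B * (2*m) := by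
      nlinarith [hsh.1, hsh.2, h3B, h3pos, hm0]
    have key2 : (3:ℤ)^β * (Rsum (f := f) k s L - Rsum (f := f) k (s-a) L) ≤ 3^B * (2*m) := by
      nlinarith [hsh.1, hsh.2, h3B, h3pos, hm0]
    have hne := pow_ne α β (by omega)
    rcases lt_or_gt_of_ne hne with hlt | hgt
    · have h1 : (1:ℤ) ≤ 2^α - 3^β := by omega
      have heq : ((2:ℤ)^α - 3^β) * Rsum (f := f) k s L
          = 3^β * (Rsum (f := f) k (s-a) L - Rsum (f := f) k s L) - E := by
        linear_combination - hE
      nlinarith [heq, key1, hE1, h1, hR0]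
    · have h1 : (1:ℤ) ≤ 3^β - 2^α := by omega
      have heq : ((3:ℤ)^β - 2^α) * Rsum (f := f) k s L
          = 3^β * (Rsum (f := f) k s L - Rsum (f := f) k (s-a) L) + E := by
        linear_combination hE
      nlinarith [heq, key2, hE2, h1, hR0]
  -- bootstrap
  set Lw : ℕ := (4*C1 + 6).toNat with hLw
  have hLwZ : (Lw : ℤ) = 4*C1 + 6 := Int.toNat_of_nonneg (by positivity)
  set supp : ℤ → Finset ℕ :=
    fun k => (Finset.range Lw).filter (fun j => vmap (f ((j:ℤ), k)).south ≠ 0) with hsupp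
  have hsupp_card : ∀ k, ((supp k).card : ℤ) ≤ C1 := by
    intro k
    have h1 : ((supp k).card : ℤ) ≤ ∑ j ∈ supp k, vmap (f ((j:ℤ),k)).south := by
      have : ((supp k).card : ℤ) = ∑ _j ∈ supp k, (1:ℤ) := by simp
      rw [this]
      apply Finset.sum_le_sum
      intro j hj
      have h2 : vmap (f ((j:ℤ),k)).south ≠ 0 := (Finset.mem_filter.mp hj).2
      have h3 := vmap_nonneg (f ((j:ℤ),k)).south
      omega
    have h2 : ∑ j ∈ supp k, vmap (f ((j:ℤ),k)).south
        ≤ ∑ j ∈ Finset.range Lw, vmap (f ((j:ℤ),k)).south :=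
      Finset.sum_le_sum_of_subset_of_nonneg (Finset.filter_subset _ _)
        (fun j _ _ => vmap_nonneg _)
    have h3 : ∑ j ∈ Finset.range Lw, vmap (f ((j:ℤ),k)).south = Rsum (f := f) k 0 Lw := by
      unfold Rsum
      apply Finset.sum_congr rfl
      intro j _
      norm_num
    have h4 := hbound k 0 Lw
    omega
  set bad : Finset ℕ :=
    ((supp 0 ∪ (supp 0).image (· - 1)) ∪ (supp 1 ∪ (supp 1).image (· - 1))) with hbad
  have hbad_card : (bad.card : ℤ) ≤ 4 * C1 := by
    have c1 := Finset.card_union_le (supp 0) ((supp 0).image (· - 1))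
    have c2 := Finset.card_union_le (supp 1) ((supp 1).image (· - 1))
    have c3 := Finset.card_union_le (supp 0 ∪ (supp 0).image (· - 1))
      (supp 1 ∪ (supp 1).image (· - 1))
    have i1 := Finset.card_image_le (s := supp 0) (f := (· - 1))
    have i2 := Finset.card_image_le (s := supp 1) (f := (· - 1))
    have s0 := hsupp_card 0
    have s1 := hsupp_card 1
    rw [hbad]
    push_cast
    push_cast at s0 s1
    omega
  have hexists : ∃ j, j ∈ Finset.range (Lw - 1) ∧ j ∉ bad := by
    by_contra hno
    push_neg at hno
    have hsub : Finset.range (Lw-1) ⊆ bad := fun j hj => hno j hj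
    have hcc := Finset.card_le_card hsub
    rw [Finset.card_range] at hcc
    have : ((Lw - 1 : ℕ) : ℤ) ≤ (bad.card : ℤ) := by exact_mod_cast hcc
    have hL1 : ((Lw - 1 : ℕ) : ℤ) = 4*C1 + 5 := by
      have : (1:ℕ) ≤ Lw := by omega
      push_cast [this]
      omega
    omega
  obtain ⟨j, hjr, hjb⟩ := hexists
  have hjL : j < Lw - 1 := Finset.mem_range.mp hjr
  have hj0 : j ∉ supp 0 := fun h => hjb (by
    rw [hbad]; exact Finset.mem_union_left _ (Finset.mem_union_left _ h))
  have hj0' : j+1 ∉ supp 0 := fun h => hjb (by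
    rw [hbad]
    exact Finset.mem_union_left _
      (Finset.mem_union_right _ (Finset.mem_image.mpr ⟨j+1, h, rfl⟩)))
  have hj1 : j ∉ supp 1 := fun h => hjb (by
    rw [hbad]; exact Finset.mem_union_right _ (Finset.mem_union_left _ h))
  have hj1' : j+1 ∉ supp 1 := fun h => hjb (by
    rw [hbad]
    exact Finset.mem_union_right _
      (Finset.mem_union_right _ (Finset.mem_image.mpr ⟨j+1, h, rfl⟩)))
  have v00 : vmap (f ((j:ℤ),0)).south = 0 := by
    by_contra hne
    exact hj0 (Finset.mem_filter.mpr ⟨Finset.mem_range.mpr (by omega), hne⟩)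
  have v01 : vmap (f (((j+1:ℕ):ℤ),0)).south = 0 := by
    by_contra hne
    exact hj0' (Finset.mem_filter.mpr ⟨Finset.mem_range.mpr (by omega), hne⟩)
  have v10 : vmap (f ((j:ℤ),1)).south = 0 := by
    by_contra hne
    exact hj1 (Finset.mem_filter.mpr ⟨Finset.mem_range.mpr (by omega), hne⟩)
  have v11 : vmap (f (((j+1:ℕ):ℤ),1)).south = 0 := by
    by_contra hne
    exact hj1' (Finset.mem_filter.mpr ⟨Finset.mem_range.mpr (by omega), hne⟩)
  have hn0 : (f ((j:ℤ),0)).north = (f ((j:ℤ), 1)).south := by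
    have h := (hf.2 (j:ℤ) 0).2
    norm_num at h
    exact h
  have hz0 := L_zero _ (hf.1 ((j:ℤ),0)) v00 (by rw [hn0]; exact v10)
  have hs3 : (f ((j:ℤ),1)).south = 3 := by rw [← hn0]; exact hz0
  obtain ⟨hw1, he0⟩ := L_T4 _ (hf.1 ((j:ℤ),1)) hs3
  have hn0' : (f (((j+1:ℕ):ℤ),0)).north = (f (((j+1:ℕ):ℤ), 1)).south := by
    have h := (hf.2 ((j+1:ℕ):ℤ) 0).2
    norm_num at h
    exact h
  have hz0' := L_zero _ (hf.1 (((j+1:ℕ):ℤ),0)) v01 (by rw [hn0']; exact v11)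
  have hs3' : (f (((j+1:ℕ):ℤ),1)).south = 3 := by rw [← hn0']; exact hz0'
  obtain ⟨hw1', _⟩ := L_T4 _ (hf.1 (((j+1:ℕ):ℤ),1)) hs3'
  have hh := (hf.2 (j:ℤ) 1).1
  rw [he0, show ((j:ℤ)+1) = ((j+1:ℕ):ℤ) by push_cast; ring, hw1'] at hh
  exact absurd hh (by norm_num)

lemma no_period_horiz (a : ℤ) (ha : 0 < a) (hper : ∀ p : ℤ × ℤ, f (p + (a,0)) = f p) :
    False := by
  set A : ℕ := a.toNat with hA
  have hAa : (A:ℤ) = a := Int.toNat_of_nonneg (le_of_lt ha)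
  have hA1 : 1 ≤ A := by omega
  -- one-step periodicity facts
  have hstep : ∀ i k : ℤ, f (i + a, k) = f (i, k) := by
    intro i k
    have h := hper (i, k)
    rw [show ((i,k) + (a,0) : ℤ × ℤ) = (i + a, k) by simp [Prod.ext_iff]] at h
    exact h
  -- row sums over one period
  set σ : ℤ → ℤ := fun k => Rsum (f := f) k 0 A with hσ
  have hwestA : ∀ k : ℤ, (f ((0:ℤ) + ((A:ℕ):ℤ), k)).west = (f (0, k)).west := by
    intro k
    rw [show ((0:ℤ) + ((A:ℕ):ℤ)) = (0:ℤ) + a by rw [hAa]]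
    rw [zero_add]
    have := hstep 0 k
    rw [zero_add] at this
    rw [this]
  -- exact row relations
  have hrel : ∀ k : ℤ, ((f (0,k)).west < 2 ∧ σ (k+1) = 2 * σ k)
      ∨ (¬ (f (0,k)).west < 2 ∧ 3 * σ (k+1) = σ k) := by
    intro k
    by_cases hrow : (f (0,k)).west < 2
    · left
      refine ⟨hrow, ?_⟩
      have h := rowrel2 hf k 0 A hrow
      rw [hwestA k] at h
      simpa using h
    · right
      refine ⟨hrow, ?_⟩
      have h := rowrel3 hf k 0 A hrow
      rw [hwestA k] at h
      simpa using h
  have hσ0 : ∀ k, 0 ≤ σ k := fun k => Rsum_nonneg k 0 A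
  -- σ is never 0
  have hσpos : ∀ k : ℤ, σ k ≠ 0 := by
    intro k hk0
    have hk0' : ∑ j ∈ Finset.range A, vmap (f ((0:ℤ) + (j:ℤ), k)).south = 0 := hk0
    have hzero : ∀ j : ℕ, j < A → vmap (f ((j:ℤ), k)).south = 0 := by
      intro j hj
      have h := (Finset.sum_eq_zero_iff_of_nonneg (s := Finset.range A)
        (f := fun j : ℕ => vmap (f ((0:ℤ) + (j:ℤ), k)).south)
        (fun j _ => vmap_nonneg _)).mp hk0' j (Finset.mem_range.mpr hj)
      simpa using h
    have hk1 : σ (k+1) = 0 := by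
      rcases hrel k with ⟨_, h⟩ | ⟨_, h⟩
      · rw [h, hk0]; ring
      · have := hσ0 (k+1); omega
    have hk1' : ∑ j ∈ Finset.range A, vmap (f ((0:ℤ) + (j:ℤ), k+1)).south = 0 := hk1
    have hzero1 : ∀ j : ℕ, j < A → vmap (f ((j:ℤ), k+1)).south = 0 := by
      intro j hj
      have h := (Finset.sum_eq_zero_iff_of_nonneg (s := Finset.range A)
        (f := fun j : ℕ => vmap (f ((0:ℤ) + (j:ℤ), k+1)).south)
        (fun j _ => vmap_nonneg _)).mp hk1' j (Finset.mem_range.mpr hj)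
      simpa using h
    -- tiles at (0,k) and (1,k) have zero-valued south and north
    have hone : ∀ k' : ℤ, vmap (f ((1:ℤ), k')).south = 0 →
        True := fun _ _ => trivial
    -- value at position 1 row k and k+1
    have v1k : vmap (f ((1:ℤ), k)).south = 0 := by
      rcases Nat.lt_or_ge 1 A with h | h
      · simpa using hzero 1 h
      · have hAe : A = 1 := by omega
        have hp : ((1:ℤ), k) = ((0:ℤ) + a, k) := by
          simp [Prod.ext_iff]
          omega
        have : f ((1:ℤ), k) = f (0, k) := by rw [hp]; exact hstep 0 k
        rw [this]
        simpa using hzero 0 (by omega)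
    have v1k1 : vmap (f ((1:ℤ), k+1)).south = 0 := by
      rcases Nat.lt_or_ge 1 A with h | h
      · simpa using hzero1 1 h
      · have hAe : A = 1 := by omega
        have hp : ((1:ℤ), k+1) = ((0:ℤ) + a, k+1) := by
          simp [Prod.ext_iff]
          omega
        have : f ((1:ℤ), k+1) = f (0, k+1) := by rw [hp]; exact hstep 0 (k+1)
        rw [this]
        simpa using hzero1 0 (by omega)
    have v0k : vmap (f ((0:ℤ), k)).south = 0 := by simpa using hzero 0 (by omega)
    have v0k1 : vmap (f ((0:ℤ), k+1)).south = 0 := by simpa using hzero1 0 (by omega)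
    -- T4 contradiction
    have hn0 : (f ((0:ℤ),k)).north = (f ((0:ℤ), k+1)).south := (hf.2 0 k).2
    have hz0 := L_zero _ (hf.1 ((0:ℤ),k)) v0k (by rw [hn0]; exact v0k1)
    have hs3 : (f ((0:ℤ),k+1)).south = 3 := by rw [← hn0]; exact hz0
    obtain ⟨_, he0⟩ := L_T4 _ (hf.1 ((0:ℤ),k+1)) hs3
    have hn1 : (f ((1:ℤ),k)).north = (f ((1:ℤ), k+1)).south := (hf.2 1 k).2
    have hz1 := L_zero _ (hf.1 ((1:ℤ),k)) v1k (by rw [hn1]; exact v1k1)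
    have hs3' : (f ((1:ℤ),k+1)).south = 3 := by rw [← hn1]; exact hz1
    obtain ⟨hw1, _⟩ := L_T4 _ (hf.1 ((1:ℤ),k+1)) hs3'
    have hh := (hf.2 0 (k+1)).1
    rw [he0, zero_add, hw1] at hh
    exact absurd hh (by norm_num)
  -- pigeonhole on rows
  have hfin : Finite (Fin A → {t // t ∈ culikSet}) := by infer_instance
  obtain ⟨m₁, m₂, hne, heq⟩ := Finite.exists_ne_map_eq_of_infinite
    (fun (m : ℕ) (j : Fin A) => (⟨f ((j:ℤ), (m:ℤ)), hf.1 _⟩ : {t // t ∈ culikSet}))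
  -- wlog m₁ < m₂
  wlog hlt : m₁ < m₂ generalizing m₁ m₂
  · exact this m₂ m₁ hne.symm heq.symm (by omega)
  have hroweq : ∀ j : ℕ, j < A → f ((j:ℤ), (m₁:ℤ)) = f ((j:ℤ), (m₂:ℤ)) := by
    intro j hj
    have := congrFun heq ⟨j, hj⟩
    exact Subtype.ext_iff.mp this
  have hσeq : σ (m₁:ℤ) = σ (m₂:ℤ) := by
    apply Finset.sum_congr rfl
    intro j hj
    simp only [zero_add]
    rw [hroweq j (Finset.mem_range.mp hj)]
  -- multiplicative iteration
  have hiter : ∀ j : ℕ, ∃ α β : ℕ, α + β = j ∧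
      (3:ℤ)^β * σ ((m₁:ℤ) + j) = 2^α * σ (m₁:ℤ) := by
    intro j
    induction j with
    | zero => exact ⟨0, 0, rfl, by norm_num⟩
    | succ j ih =>
      obtain ⟨α, β, hαβ, hE⟩ := ih
      have hj1 : ((m₁:ℤ) + (j+1:ℕ)) = ((m₁:ℤ) + j) + 1 := by push_cast; ring
      rcases hrel ((m₁:ℤ) + j) with ⟨_, h⟩ | ⟨_, h⟩
      · exact ⟨α + 1, β, by omega, by rw [hj1]; linear_combination (2:ℤ) * hE + (3:ℤ)^β * h⟩
      · exact ⟨α, β + 1, by omega, by rw [hj1]; linear_combination hE + (3:ℤ)^β * h⟩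
  obtain ⟨α, β, hαβ, hE⟩ := hiter (m₂ - m₁)
  rw [show ((m₁:ℤ) + ((m₂ - m₁ : ℕ):ℤ)) = (m₂:ℤ) by push_cast [Nat.cast_sub (le_of_lt hlt)]; ring] at hE
  rw [← hσeq] at hE
  have hcancel : (3:ℤ)^β = 2^α := by
    have hσne := hσpos (m₁:ℤ)
    exact mul_right_cancel₀ hσne hE
  exact pow_ne α β (by omega) hcancel

end Tiling
end KC

/-- **Kari–Culik.** There exists an aperiodic Wang tile set consisting of exactly 13 tiles. -/
theorem exists_aperiodic_wang_tile_set_card_thirteen :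
    ∃ S : Finset WangTile, S.card = 13 ∧ WangAperiodic S := by
  refine ⟨KC.culikSet, by decide, ⟨KC.F, KC.F_tiling⟩, ?_⟩
  intro f hf hper
  obtain ⟨⟨a, b⟩, hv, hp⟩ := hper
  have hneg : ∀ p : ℤ × ℤ, f (p + (-a, -b)) = f p := by
    intro p
    have h := hp (p + (-a, -b))
    have e : (p + (-a, -b) + (a, b)) = p := by
      simp [Prod.ext_iff]
    rw [e] at h
    exact h.symm
  rcases lt_trichotomy b 0 with hb | hb | hb
  · exact KC.no_period_vert hf (-a) (-b) (by omega) hneg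
  · subst hb
    rcases lt_trichotomy a 0 with hA | hA | hA
    · have hneg' : ∀ p : ℤ × ℤ, f (p + (-a, 0)) = f p := by
        intro p
        have := hneg p
        rwa [neg_zero] at this
      exact KC.no_period_horiz hf (-a) (by omega) hneg'
    · exact absurd (by rw [hA]; rfl : ((a, (0:ℤ)) : ℤ × ℤ) = 0) hv
    · exact KC.no_period_horiz hf a hA hp
  · exact KC.no_period_vert hf a b hb hp
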